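/- Let {a_n}, {b_n}, {c_n} be finite sequences of nonnegative reals with a_i b_j c_{i+j} not identically zero, and let (X,Y) be a pair of integer-valued random variables with P(X=i, Y=j) = K a_i b_j c_{i+j} for a normalizing constant K. If {b_n} is log-concave (with interval support), then X is stochastically increasing in X+Y: for each k with P(X+Y=k), P(X+Y=k+1) > 0, the conditional law of X given X+Y=k+1 stochastically dominates the conditional law of X given X+Y=k. -/
import Mathlib


open Finset

/-- A nonnegative sequence is log-concave with interval support. -/
def LogConcaveSeq (q : ℕ → ℝ) : Prop :=
  (∀ j, q j * q (j + 2) ≤ q (j + 1) ^ 2) ∧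
  (∀ i j k, i ≤ j → j ≤ k → 0 < q i → 0 < q k → 0 < q j)

lemma lc_key (b : ℕ → ℝ) (hb : ∀ i, 0 ≤ b i) (hblc : LogConcaveSeq b) :
    ∀ d m : ℕ, b m * b (m + d + 1) ≤ b (m + 1) * b (m + d) := by
  intro d
  induction d with
  | zero => intro m; rw [add_zero, mul_comm]
  | succ d ih =>
    intro m
    rcases eq_or_lt_of_le (hb m) with h0 | hm
    · rw [← h0, zero_mul]
      exact mul_nonneg (hb _) (hb _)
    rcases eq_or_lt_of_le (hb (m + (d + 1) + 1)) with h0 | hn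
    · rw [← h0, mul_zero]
      exact mul_nonneg (hb _) (hb _)
    have h1 : 0 < b (m + 1) := hblc.2 m (m + 1) (m + (d + 1) + 1) (by omega) (by omega) hm hn
    have h2 : 0 < b (m + d) := hblc.2 m (m + d) (m + (d + 1) + 1) (by omega) (by omega) hm hn
    have h3 : 0 < b (m + d + 1) := hblc.2 m (m + d + 1) (m + (d + 1) + 1) (by omega) (by omega) hm hn
    have hih := ih m
    have hlc := hblc.1 (m + d)
    show b m * b (m + d + 2) ≤ b (m + 1) * b (m + d + 1)
    -- want: b m * b (m+d+2) ≤ b (m+1) * b (m+d+1)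
    nlinarith [mul_le_mul hih hlc (mul_nonneg h2.le (hb _)) (mul_nonneg h1.le h2.le),
      mul_pos h2 h3]

lemma cross_dom (μ ν : ℕ → ℝ) (hμ : ∀ i, 0 ≤ μ i) (hν : ∀ i, 0 ≤ ν i) (N t : ℕ)
    (hdom : ∀ i j, j < i → ν i * μ j ≤ μ i * ν j)
    (hνpos : 0 < ∑ i ∈ Finset.range N, ν i)
    (hμpos : 0 < ∑ i ∈ Finset.range N, μ i) :
    (∑ i ∈ (Finset.range N).filter (fun i => t ≤ i), ν i) / (∑ i ∈ Finset.range N, ν i)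
      ≤ (∑ i ∈ (Finset.range N).filter (fun i => t ≤ i), μ i)
        / (∑ i ∈ Finset.range N, μ i) := by
  rw [div_le_div_iff₀ hνpos hμpos]
  have hsplitμ : ∑ i ∈ Finset.range N, μ i
      = (∑ i ∈ (Finset.range N).filter (fun i => t ≤ i), μ i)
        + ∑ i ∈ (Finset.range N).filter (fun i => ¬ t ≤ i), μ i :=
    (Finset.sum_filter_add_sum_filter_not _ _ _).symm
  have hsplitν : ∑ i ∈ Finset.range N, ν i
      = (∑ i ∈ (Finset.range N).filter (fun i => t ≤ i), ν i)
        + ∑ i ∈ (Finset.range N).filter (fun i => ¬ t ≤ i), ν i :=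
    (Finset.sum_filter_add_sum_filter_not _ _ _).symm
  rw [hsplitμ, hsplitν, mul_add, mul_add]
  have hcross : (∑ i ∈ (Finset.range N).filter (fun i => t ≤ i), ν i)
        * (∑ j ∈ (Finset.range N).filter (fun i => ¬ t ≤ i), μ j)
      ≤ (∑ i ∈ (Finset.range N).filter (fun i => t ≤ i), μ i)
        * (∑ j ∈ (Finset.range N).filter (fun i => ¬ t ≤ i), ν j) := by
    rw [Finset.sum_mul_sum, Finset.sum_mul_sum]
    refine Finset.sum_le_sum fun i hi => Finset.sum_le_sum fun j hj => ?_
    simp only [Finset.mem_filter, Finset.mem_range] at hi hj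
    exact hdom i j (by omega)
  have hcomm : (∑ i ∈ (Finset.range N).filter (fun i => t ≤ i), ν i)
        * (∑ i ∈ (Finset.range N).filter (fun i => t ≤ i), μ i)
      = (∑ i ∈ (Finset.range N).filter (fun i => t ≤ i), μ i)
        * (∑ i ∈ (Finset.range N).filter (fun i => t ≤ i), ν i) := mul_comm _ _
  linarith

/-- Lemma (abc), part (i): if `P(X=i, Y=j) = K aᵢ bⱼ c_{i+j}` with `b` log-concave, then
`X` is stochastically increasing in `X+Y`: the conditional law of `X` given `X+Y = k+1`
(with weights `i ↦ aᵢ b_{k+1-i} c_{k+1}`) stochastically dominates the conditional law of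
`X` given `X+Y = k` (with weights `i ↦ aᵢ b_{k-i} c_k`), whenever both conditioning events
have positive probability. -/
theorem stmt_5 (a b c : ℕ → ℝ)
    (ha : ∀ i, 0 ≤ a i) (hb : ∀ i, 0 ≤ b i) (hc : ∀ i, 0 ≤ c i)
    (hblc : LogConcaveSeq b) (k : ℕ)
    (hk : 0 < ∑ i ∈ Finset.range (k+1), a i * b (k - i) * c k)
    (hk1 : 0 < ∑ i ∈ Finset.range (k+2), a i * b (k+1 - i) * c (k+1)) :
    ∀ t : ℕ,
      (∑ i ∈ (Finset.range (k+1)).filter (fun i => t ≤ i), a i * b (k - i) * c k)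
          / (∑ i ∈ Finset.range (k+1), a i * b (k - i) * c k)
        ≤ (∑ i ∈ (Finset.range (k+2)).filter (fun i => t ≤ i), a i * b (k+1 - i) * c (k+1))
          / (∑ i ∈ Finset.range (k+2), a i * b (k+1 - i) * c (k+1)) := by
  intro t
  set ν : ℕ → ℝ := fun i => if i ≤ k then a i * b (k - i) * c k else 0 with hνdef
  set μ : ℕ → ℝ := fun i => a i * b (k + 1 - i) * c (k + 1) with hμdef
  have hνnn : ∀ i, 0 ≤ ν i := by
    intro i; simp only [hνdef]; split
    · exact mul_nonneg (mul_nonneg (ha _) (hb _)) (hc _)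
    · exact le_refl 0
  have hμnn : ∀ i, 0 ≤ μ i := fun i =>
    mul_nonneg (mul_nonneg (ha _) (hb _)) (hc _)
  have h1 : ∑ i ∈ Finset.range (k+2), ν i = ∑ i ∈ Finset.range (k+1), a i * b (k - i) * c k := by
    rw [Finset.sum_range_succ]
    have hz : ν (k+1) = 0 := by simp only [hνdef]; rw [if_neg (by omega)]
    rw [hz, add_zero]
    exact Finset.sum_congr rfl fun x hx => by
      simp only [hνdef]; rw [if_pos (by rw [Finset.mem_range] at hx; omega)]
  have h2 : ∑ i ∈ (Finset.range (k+2)).filter (fun i => t ≤ i), ν i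
      = ∑ i ∈ (Finset.range (k+1)).filter (fun i => t ≤ i), a i * b (k - i) * c k := by
    have hsub : (Finset.range (k+1)).filter (fun i => t ≤ i)
        ⊆ (Finset.range (k+2)).filter (fun i => t ≤ i) :=
      Finset.filter_subset_filter _ (Finset.range_subset_range.mpr (by omega))
    rw [← Finset.sum_subset hsub (fun x hx hxs => by
      simp only [Finset.mem_filter, Finset.mem_range] at hx hxs
      simp only [hνdef]; rw [if_neg (by omega)])]
    exact Finset.sum_congr rfl fun x hx => by
      simp only [Finset.mem_filter, Finset.mem_range] at hx
      simp only [hνdef]; rw [if_pos (by omega)]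
  rw [← h1, ← h2]
  have hdom : ∀ i j, j < i → ν i * μ j ≤ μ i * ν j := by
    intro i j hji
    by_cases hik : i ≤ k
    · have hjk : j ≤ k := by omega
      simp only [hνdef, hμdef]
      rw [if_pos hik, if_pos hjk]
      have hs1 : k + 1 - i = (k - i) + 1 := by omega
      have hs2 : k + 1 - j = (k - j) + 1 := by omega
      have hd : k - j = (k - i) + (i - j) := by omega
      have hkey := lc_key b hb hblc (i - j) (k - i)
      rw [← hd] at hkey
      have hkey' : b (k - i) * b (k - j + 1) ≤ b (k - i + 1) * b (k - j) := hkey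
      calc a i * b (k - i) * c k * (a j * b (k + 1 - j) * c (k + 1))
          = (a i * a j * c k * c (k + 1)) * (b (k - i) * b (k - j + 1)) := by
            rw [hs2]; ring
        _ ≤ (a i * a j * c k * c (k + 1)) * (b (k - i + 1) * b (k - j)) := by
            apply mul_le_mul_of_nonneg_left hkey'
            exact mul_nonneg (mul_nonneg (mul_nonneg (ha _) (ha _)) (hc _)) (hc _)
        _ = a i * b (k + 1 - i) * c (k + 1) * (a j * b (k - j) * c k) := by
            rw [hs1]; ring
    · have hz : ν i = 0 := by simp only [hνdef]; rw [if_neg hik]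
      rw [hz, zero_mul]
      exact mul_nonneg (hμnn _) (hνnn _)
  exact cross_dom μ ν hμnn hνnn (k+2) t hdom (by rw [h1]; exact hk) hk1
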